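/- Fix integers N ≥ 1, k, and a real number θ with N - kθ ≠ 0, and set f = k/(2π(N - kθ)). Let F_{μν}, for μ,ν ∈ {1,2,3,4}, be the constant (N²×N²)-matrix-valued curvature with F_{12} = -F_{34} = -i f · 1_{N²}, F_{21} = -F_{12}, F_{43} = -F_{34}, and all other components zero (where 1_{N²} is the N²×N² identity matrix). Then the instanton number I := (1/8π²) · (1/4) · ∫_{[0,2π]⁴} Σ_{μ,ν,ρ,σ=1}^{4} ε_{μνρσ} tr(F_{μν} F_{ρσ}) dx equals k²N²/(N - kθ)². In particular, for θ = 0 (so f = k/(2πN)) the instanton number equals k². -/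

import Mathlib

open MeasureTheory Real

/-- The Levi-Civita symbol on four indices, with `leviCivita 0 1 2 3 = 1`. -/
noncomputable def leviCivita (a b c d : Fin 4) : ℤ :=
  if h : Function.Bijective ![a, b, c, d] then
    (Equiv.Perm.sign (Equiv.ofBijective ![a, b, c, d] h) : ℤ)
  else 0

/-- The constant curvature of the twisted instanton on the (noncommutative) 4-torus:
`F_{12} = -F_{34} = -i f · 1_{N²}`, `F_{21} = -F_{12}`, `F_{43} = -F_{34}`, all other
components zero. -/
noncomputable def torusCurv (N : ℕ) (f : ℝ) :
    Fin 4 → Fin 4 → Matrix (Fin (N ^ 2)) (Fin (N ^ 2)) ℂ := fun μ ν =>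
  if μ = 0 ∧ ν = 1 then (-(Complex.I * (f : ℂ))) • (1 : Matrix (Fin (N ^ 2)) (Fin (N ^ 2)) ℂ)
  else if μ = 1 ∧ ν = 0 then (Complex.I * (f : ℂ)) • 1
  else if μ = 2 ∧ ν = 3 then (Complex.I * (f : ℂ)) • 1
  else if μ = 3 ∧ ν = 2 then (-(Complex.I * (f : ℂ))) • 1
  else 0

/-- Integer sign pattern of the curvature components. -/
def torusSgn (μ ν : Fin 4) : ℤ :=
  if μ = 0 ∧ ν = 1 then -1
  else if μ = 1 ∧ ν = 0 then 1
  else if μ = 2 ∧ ν = 3 then 1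
  else if μ = 3 ∧ ν = 2 then -1
  else 0

lemma torusCurv_eq (N : ℕ) (f : ℝ) (μ ν : Fin 4) :
    torusCurv N f μ ν = ((torusSgn μ ν : ℂ) * (Complex.I * (f : ℂ))) • 1 := by
  unfold torusCurv torusSgn
  split_ifs <;> simp

set_option maxHeartbeats 1000000 in
lemma leviCivita_sgn_sum :
    (∑ μ : Fin 4, ∑ ν : Fin 4, ∑ ρ : Fin 4, ∑ σ : Fin 4,
      leviCivita μ ν ρ σ * torusSgn μ ν * torusSgn ρ σ) = -8 := by decide

lemma sum_eval (N : ℕ) (f : ℝ) :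
    (∑ μ : Fin 4, ∑ ν : Fin 4, ∑ ρ : Fin 4, ∑ σ : Fin 4,
      (leviCivita μ ν ρ σ : ℂ) *
        Matrix.trace (torusCurv N f μ ν * torusCurv N f ρ σ))
    = 8 * (f : ℂ) ^ 2 * (N : ℂ) ^ 2 := by
  have step : (∑ μ : Fin 4, ∑ ν : Fin 4, ∑ ρ : Fin 4, ∑ σ : Fin 4,
      (leviCivita μ ν ρ σ : ℂ) *
        Matrix.trace (torusCurv N f μ ν * torusCurv N f ρ σ))
      = ∑ μ : Fin 4, ∑ ν : Fin 4, ∑ ρ : Fin 4, ∑ σ : Fin 4,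
        ((leviCivita μ ν ρ σ * torusSgn μ ν * torusSgn ρ σ : ℤ) : ℂ) *
          ((Complex.I * (f : ℂ)) ^ 2 * ((N : ℂ) ^ 2)) := by
    refine Finset.sum_congr rfl fun μ _ => Finset.sum_congr rfl fun ν _ =>
      Finset.sum_congr rfl fun ρ _ => Finset.sum_congr rfl fun σ _ => ?_
    rw [torusCurv_eq, torusCurv_eq, Matrix.smul_mul, Matrix.one_mul, Matrix.trace_smul,
      Matrix.trace_smul, Matrix.trace_one]
    push_cast
    simp only [smul_eq_mul, Fintype.card_fin]
    push_cast
    ring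
  rw [step]
  simp only [← Finset.sum_mul, ← Int.cast_sum, leviCivita_sgn_sum]
  have hI : (Complex.I * (f : ℂ)) ^ 2 = -((f : ℂ) ^ 2) := by
    rw [mul_pow, Complex.I_sq]; ring
  rw [hI]
  push_cast
  ring

theorem torus_instanton_number (N : ℕ) (hN : 1 ≤ N) (k : ℤ) (θ : ℝ)
    (h : (N : ℝ) - k * θ ≠ 0) (f : ℝ) (hf : f = k / (2 * π * ((N : ℝ) - k * θ))) :
    (((8 * π ^ 2 : ℝ) : ℂ))⁻¹ * (1 / 4) *
      ∫ x in (WithLp.ofLp ⁻¹' (Set.univ.pi fun _ : Fin 4 => Set.Icc (0 : ℝ) (2 * π)) :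
          Set (EuclideanSpace ℝ (Fin 4))),
        ∑ μ : Fin 4, ∑ ν : Fin 4, ∑ ρ : Fin 4, ∑ σ : Fin 4,
          (leviCivita μ ν ρ σ : ℂ) *
            Matrix.trace (torusCurv N f μ ν * torusCurv N f ρ σ)
      = (((k : ℝ) ^ 2 * (N : ℝ) ^ 2 / ((N : ℝ) - k * θ) ^ 2 : ℝ) : ℂ) := by
  have hvol : (volume : Measure (Fin 4 → ℝ))
      (Set.univ.pi fun _ : Fin 4 => Set.Icc (0 : ℝ) (2 * π)) = ENNReal.ofReal (2 * π) ^ 4 := by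
    rw [volume_pi_pi]
    simp [Real.volume_Icc]
  have hvol' : (volume : Measure (EuclideanSpace ℝ (Fin 4)))
      (WithLp.ofLp ⁻¹' (Set.univ.pi fun _ : Fin 4 => Set.Icc (0 : ℝ) (2 * π)))
        = ENNReal.ofReal (2 * π) ^ 4 := by
    rw [(PiLp.volume_preserving_ofLp (Fin 4)).measure_preimage
      (MeasurableSet.univ_pi fun _ => measurableSet_Icc).nullMeasurableSet]
    exact hvol
  rw [setIntegral_const, sum_eval, measureReal_def, hvol']
  have h2π : (0 : ℝ) ≤ 2 * π := by positivity
  have htoReal : ((ENNReal.ofReal (2 * π)) ^ 4).toReal = (2 * π) ^ 4 := by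
    rw [ENNReal.toReal_pow, ENNReal.toReal_ofReal h2π]
  rw [htoReal]
  have hπ : (π : ℝ) ≠ 0 := Real.pi_ne_zero
  have hreal : ((8 * π ^ 2 : ℝ))⁻¹ * (1 / 4) * ((2 * π) ^ 4 * (8 * f ^ 2 * (N : ℝ) ^ 2))
      = (k : ℝ) ^ 2 * (N : ℝ) ^ 2 / ((N : ℝ) - k * θ) ^ 2 := by
    rw [hf]; field_simp; ring
  rw [Complex.real_smul, ← hreal]
  push_cast
  ring
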